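/- Let λ ≥ 0, let φ : [0,∞) → ℝ be continuous on some interval [0,ε] (ε > 0), and let ψ : [0,∞) → ℝ be continuous at 0 and right-differentiable at 0 with right derivative ψ'(0), and suppose ψ(0) < φ(0). Define J_λ(t) := ∫₀ᵗ λ·e^(−λτ)·φ(τ) dτ + e^(−λt)·φ(t) and Q^λ_s := min{ inf_{t ∈ [0,s]} J_λ(t), ∫₀ˢ λ·e^(−λτ)·φ(τ) dτ + e^(−λs)·ψ(s) }. Then lim_{s → 0⁺} ( Q^λ_s − ψ(0) ) / s = ψ'(0) + λ·(φ(0) − ψ(0)). -/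

import Mathlib

open Set Filter MeasureTheory intervalIntegral Topology

private lemma expIntegral (lam a b : ℝ) :
    (∫ τ in a..b, lam * Real.exp (-(lam * τ))) = Real.exp (-(lam * a)) - Real.exp (-(lam * b)) := by
  have h : ∀ τ ∈ Set.uIcc a b, HasDerivAt (fun τ => -Real.exp (-(lam * τ)))
      (lam * Real.exp (-(lam * τ))) τ := by
    intro τ _
    have h1 : HasDerivAt (fun τ : ℝ => -(lam * τ)) (-lam) τ := by
      exact (((hasDerivAt_id τ).const_mul lam).neg).congr_deriv (by ring)
    have := h1.exp
    exact this.neg.congr_deriv (by ring)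
  have := intervalIntegral.integral_eq_sub_of_hasDerivAt h (by
    apply Continuous.intervalIntegrable; continuity)
  rw [this]; ring

set_option maxHeartbeats 1000000 in
/-- **Advantage computation in the case V^λ(x) < c(x) (trajectory-wise form).**
Let `λ ≥ 0`, `φ : [0,∞) → ℝ` continuous on some `[0,ε]` (`ε > 0`), and
`ψ : [0,∞) → ℝ` continuous at `0` and right-differentiable at `0` with right
derivative `ψ'(0)`, with `ψ(0) < φ(0)`. With
`J_λ(t) = ∫₀ᵗ λ·e^(−λτ)·φ(τ) dτ + e^(−λt)·φ(t)` and
`Q^λ_s = min { inf_{t ∈ [0,s]} J_λ(t), ∫₀ˢ λ·e^(−λτ)·φ(τ) dτ + e^(−λs)·ψ(s) }`,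
we have `lim_{s → 0⁺} (Q^λ_s − ψ(0)) / s = ψ'(0) + λ·(φ(0) − ψ(0))`. -/
theorem advantage_limit_strict_case
    (lam ε : ℝ) (hlam : 0 ≤ lam) (hε : 0 < ε)
    (φ ψ : ℝ → ℝ) (ψ' : ℝ)
    (hφ : ContinuousOn φ (Set.Icc 0 ε))
    (hψ0 : ContinuousWithinAt ψ (Set.Ici 0) 0)
    (hψ : HasDerivWithinAt ψ ψ' (Set.Ici 0) 0)
    (h0 : ψ 0 < φ 0)
    (J : ℝ → ℝ)
    (hJ : ∀ t, J t = (∫ τ in (0:ℝ)..t, lam * Real.exp (-(lam * τ)) * φ τ)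
      + Real.exp (-(lam * t)) * φ t)
    (Q : ℝ → ℝ)
    (hQ : ∀ s, Q s = min (sInf (J '' Set.Icc 0 s))
      ((∫ τ in (0:ℝ)..s, lam * Real.exp (-(lam * τ)) * φ τ)
        + Real.exp (-(lam * s)) * ψ s)) :
    Filter.Tendsto (fun s : ℝ => (Q s - ψ 0) / s)
      (nhdsWithin 0 (Set.Ioi 0)) (nhds (ψ' + lam * (φ 0 - ψ 0))) := by
  set f : ℝ → ℝ := fun τ => lam * Real.exp (-(lam * τ)) * φ τ with hfdef
  set G : ℝ → ℝ := fun s => (∫ τ in (0:ℝ)..s, f τ) + Real.exp (-(lam * s)) * ψ s with hGdef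
  have hfc : ContinuousOn f (Icc 0 ε) := by
    apply ContinuousOn.mul _ hφ
    exact (by continuity : Continuous fun τ : ℝ => lam * Real.exp (-(lam * τ))).continuousOn
  have hG0 : G 0 = ψ 0 := by simp [hGdef]
  -- Part B : derivative of G at 0 within Ici 0
  have hmem0 : (0:ℝ) ∈ Icc (0:ℝ) ε := ⟨le_refl 0, hε.le⟩
  have hF : HasDerivWithinAt (fun s => ∫ τ in (0:ℝ)..s, f τ) (f 0) (Ici 0) 0 := by
    have hIccmem : Icc (0:ℝ) ε ∈ 𝓝[Set.Ioi 0] (0:ℝ) :=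
      nhdsWithin_mono 0 Ioi_subset_Ici_self
        (Icc_mem_nhdsGE hε)
    have hmeas : StronglyMeasurableAtFilter f (𝓝[Set.Ioi 0] (0:ℝ)) :=
      ⟨Icc 0 ε, hIccmem, hfc.aestronglyMeasurable measurableSet_Icc⟩
    have hb : ContinuousWithinAt f (Set.Ioi 0) 0 :=
      (hfc 0 hmem0).mono_of_mem_nhdsWithin hIccmem
    have hint : IntervalIntegrable f volume 0 0 := by
      apply ContinuousOn.intervalIntegrable
      apply hfc.mono
      simp [Set.uIcc_self, Set.singleton_subset_iff, hmem0]
    exact intervalIntegral.integral_hasDerivWithinAt_right hint hmeas hb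
  have hexp : HasDerivAt (fun s : ℝ => Real.exp (-(lam * s))) (-lam) 0 := by
    have h1 : HasDerivAt (fun s : ℝ => -(lam * s)) (-lam) 0 := by
      exact (((hasDerivAt_id (0:ℝ)).const_mul lam).neg).congr_deriv (by ring)
    simpa using h1.exp
  have hGd : HasDerivWithinAt G (ψ' + lam * (φ 0 - ψ 0)) (Ici 0) 0 := by
    have := hF.add ((hexp.hasDerivWithinAt).mul hψ)
    exact this.congr_deriv (by simp [hfdef]; ring)
  have hGt : Tendsto (fun s : ℝ => (G s - ψ 0) / s) (𝓝[Set.Ioi 0] 0)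
      (𝓝 (ψ' + lam * (φ 0 - ψ 0))) := by
    have h := hasDerivWithinAt_iff_tendsto_slope.mp hGd
    rw [Set.Ici_sdiff_left] at h
    apply h.congr
    intro s
    simp [slope_def_field, hG0]
  -- Part A : Q s = G s eventually on the right of 0
  set η : ℝ := (φ 0 - ψ 0) / 4 with hηdef
  have hη : 0 < η := by rw [hηdef]; linarith
  have hφev : ∀ᶠ t in 𝓝[Icc 0 ε] (0:ℝ), |φ t - φ 0| < η := by
    have := (hφ 0 hmem0) (Metric.ball_mem_nhds (φ 0) hη)
    filter_upwards [this] with t ht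
    simpa [Real.dist_eq] using ht
  have hψev : ∀ᶠ t in 𝓝[Ici 0] (0:ℝ), |ψ t - ψ 0| < η := by
    have := hψ0 (Metric.ball_mem_nhds (ψ 0) hη)
    filter_upwards [this] with t ht
    simpa [Real.dist_eq] using ht
  rw [eventually_nhdsWithin_iff, Metric.eventually_nhds_iff] at hφev hψev
  obtain ⟨δ₁, hδ₁, hφb⟩ := hφev
  obtain ⟨δ₂, hδ₂, hψb⟩ := hψev
  set δ : ℝ := min (min δ₁ δ₂) (min ε (Real.log 2 / (lam + 1))) with hδdef
  have hlog2 : 0 < Real.log 2 := Real.log_pos (by norm_num)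
  have hδ : 0 < δ := by
    apply lt_min (lt_min hδ₁ hδ₂) (lt_min hε (div_pos hlog2 (by linarith)))
  have hδε : δ ≤ ε := le_trans (min_le_right _ _) (min_le_left _ _)
  have key : ∀ s ∈ Ioo (0:ℝ) δ, Q s = G s := by
    intro s hs
    obtain ⟨hs0, hsδ⟩ := hs
    have hsε : s ≤ ε := le_trans hsδ.le hδε
    have hes : (1:ℝ)/2 ≤ Real.exp (-(lam * s)) := by
      have h1 : s < Real.log 2 / (lam + 1) :=
        lt_of_lt_of_le hsδ (le_trans (min_le_right _ _) (min_le_right _ _))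
      have h2 : lam * s ≤ Real.log 2 := by
        have : s * (lam + 1) ≤ Real.log 2 := by
          rw [← le_div_iff₀ (by linarith)]; exact h1.le
        nlinarith
      calc (1:ℝ)/2 = Real.exp (-Real.log 2) := by
            rw [Real.exp_neg, Real.exp_log (by norm_num : (0:ℝ) < 2)]; norm_num
        _ ≤ Real.exp (-(lam * s)) := Real.exp_le_exp.mpr (by linarith)
    have hψs : |ψ s - ψ 0| < η := hψb (by
      rw [Real.dist_eq, sub_zero, abs_of_pos hs0]
      exact lt_of_lt_of_le hsδ (le_trans (min_le_left _ _) (min_le_right _ _))) hs0.le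
    have hφbnd : ∀ t ∈ Icc 0 s, |φ t - φ 0| < η := by
      intro t ht
      refine hφb ?_ ⟨ht.1, le_trans ht.2 hsε⟩
      rw [Real.dist_eq, sub_zero, abs_of_nonneg ht.1]
      exact lt_of_le_of_lt ht.2 (lt_of_lt_of_le hsδ (le_trans (min_le_left _ _) (min_le_left _ _)))
    have JGe : ∀ t ∈ Icc 0 s, G s ≤ J t := by
      intro t ht
      obtain ⟨ht0, hts⟩ := ht
      have hsub1 : Icc (0:ℝ) t ⊆ Icc 0 ε := Icc_subset_Icc le_rfl (le_trans hts hsε)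
      have hsub2 : Icc t s ⊆ Icc 0 ε := Icc_subset_Icc ht0 hsε
      have hint1 : IntervalIntegrable f volume 0 t :=
        (hfc.mono (by rwa [Set.uIcc_of_le ht0])).intervalIntegrable
      have hint2 : IntervalIntegrable f volume t s :=
        (hfc.mono (by rwa [Set.uIcc_of_le hts])).intervalIntegrable
      have hsplit : (∫ τ in (0:ℝ)..s, f τ)
          = (∫ τ in (0:ℝ)..t, f τ) + ∫ τ in t..s, f τ :=
        (intervalIntegral.integral_add_adjacent_intervals hint1 hint2).symm
      rw [hJ t, hGdef]
      simp only
      rw [hsplit]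
      have et := Real.exp_pos (-(lam * t))
      have es := Real.exp_pos (-(lam * s))
      have het1 : Real.exp (-(lam * t)) ≤ 1 := by
        rw [Real.exp_le_one_iff]
        have : 0 ≤ lam * t := mul_nonneg hlam ht0
        linarith
      -- bound the middle integral
      have hmid : (∫ τ in t..s, f τ)
          ≤ (Real.exp (-(lam * t)) - Real.exp (-(lam * s))) * (φ 0 + η) := by
        have hmono : (∫ τ in t..s, f τ)
            ≤ ∫ τ in t..s, lam * Real.exp (-(lam * τ)) * (φ 0 + η) := by
          apply intervalIntegral.integral_mono_on hts hint2
          · apply Continuous.intervalIntegrable; continuity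
          · intro τ hτ
            have hb := hφbnd τ ⟨le_trans ht0 hτ.1, hτ.2⟩
            have : φ τ ≤ φ 0 + η := by
              have := abs_lt.mp hb
              linarith [this.2]
            exact mul_le_mul_of_nonneg_left this
              (mul_nonneg hlam (Real.exp_pos _).le)
        calc (∫ τ in t..s, f τ)
            ≤ ∫ τ in t..s, lam * Real.exp (-(lam * τ)) * (φ 0 + η) := hmono
          _ = (∫ τ in t..s, lam * Real.exp (-(lam * τ))) * (φ 0 + η) := by
              rw [← intervalIntegral.integral_mul_const]
          _ = (Real.exp (-(lam * t)) - Real.exp (-(lam * s))) * (φ 0 + η) := by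
              rw [expIntegral]
      have hφt : Real.exp (-(lam * t)) * (φ 0 - η) ≤ Real.exp (-(lam * t)) * φ t := by
        apply mul_le_mul_of_nonneg_left _ et.le
        have := abs_lt.mp (hφbnd t ⟨ht0, hts⟩)
        linarith [this.1]
      have hψs' : Real.exp (-(lam * s)) * ψ s ≤ Real.exp (-(lam * s)) * (ψ 0 + η) := by
        apply mul_le_mul_of_nonneg_left _ es.le
        have := abs_lt.mp hψs
        linarith [this.2]
      have hkey : (Real.exp (-(lam * t)) - Real.exp (-(lam * s))) * (φ 0 + η)
          + Real.exp (-(lam * s)) * (ψ 0 + η) ≤ Real.exp (-(lam * t)) * (φ 0 - η) := by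
        rw [hηdef]
        nlinarith [hes, het1, es, et]
      linarith
    have hGle : G s ≤ sInf (J '' Icc 0 s) := by
      have hne : (J '' Icc 0 s).Nonempty := ⟨J 0, ⟨0, ⟨le_refl 0, hs0.le⟩, rfl⟩⟩
      apply le_csInf hne
      rintro b ⟨t, ht, rfl⟩
      exact JGe t ht
    rw [hQ s]
    exact min_eq_right hGle
  apply hGt.congr'
  filter_upwards [Ioo_mem_nhdsGT hδ] with s hs
  rw [key s hs]
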